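/- Let M be a metric space, let N be a subset of M, and let A be an infinite dense subset of N (dense for the induced topology on N). Then there exists a subset S of M with N ⊆ S such that S is an almost isometric local retract of M and S has a dense subset of cardinality at most the cardinality of A. -/

import Mathlib

open Cardinal

/-- A subset `N` of a metric space `M` is an almost isometric local retract of `M` if for
every finite subset `E` of `M` and every `ε > 0` there exists a map `r : E → N` fixing
every point of `E ∩ N` with `(1-ε) d(x,y) ≤ d(r x, r y) ≤ (1+ε) d(x,y)` on `E`. -/
def IsAILocalRetract {M : Type*} [MetricSpace M] (N : Set M) : Prop :=
  ∀ E : Finset M, ∀ ε : ℝ, 0 < ε →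
    ∃ r : M → M, (∀ x ∈ E, r x ∈ N) ∧ (∀ e ∈ E, e ∈ N → r e = e) ∧
      ∀ x ∈ E, ∀ y ∈ E,
        (1 - ε) * dist x y ≤ dist (r x) (r y) ∧
          dist (r x) (r y) ≤ (1 + ε) * dist x y

namespace Stmt18Aux

variable {M : Type*} [MetricSpace M]

/-- lookup in a list of lists of rationals -/
def ql (q : List (List ℚ)) (i j : ℕ) : ℚ := (q.getD i []).getD j 0

/-- a request: base points, number of new points, two rational distance matrices, tolerance -/
def Req (M : Type*) := List M × ℕ × List (List ℚ) × List (List ℚ) × ℚ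

/-- `gs` realizes the request `ρ` -/
def Sat (x₀ : M) (ρ : Req M) (gs : List M) : Prop :=
  gs.length = ρ.2.1 ∧
  (∀ i j, i < ρ.1.length → j < gs.length →
      |dist (ρ.1.getD i x₀) (gs.getD j x₀) - (ql ρ.2.2.1 i j : ℝ)| ≤ (ρ.2.2.2.2 : ℝ)) ∧
  (∀ j j', j < gs.length → j' < gs.length →
      |dist (gs.getD j x₀) (gs.getD j' x₀) - (ql ρ.2.2.2.1 j j' : ℝ)| ≤ (ρ.2.2.2.2 : ℝ))

open Classical in
noncomputable def wit (x₀ : M) (ρ : Req M) : List M :=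
  if h : ∃ gs, Sat x₀ ρ gs then h.choose else []

lemma wit_sat (x₀ : M) (ρ : Req M) (h : ∃ gs, Sat x₀ ρ gs) : Sat x₀ ρ (wit x₀ ρ) := by
  classical
  rw [wit]
  rw [dif_pos h]
  exact h.choose_spec

noncomputable def step (x₀ : M) (D : Set M) : Set M :=
  D ∪ ⋃ ρ ∈ {ρ : Req M | ∀ d ∈ ρ.1, d ∈ D}, {x | x ∈ wit x₀ ρ}

lemma subset_step (x₀ : M) (D : Set M) : D ⊆ step x₀ D := Set.subset_union_left

lemma mem_step (x₀ : M) (D : Set M) {ρ : Req M} (hρ : ∀ d ∈ ρ.1, d ∈ D) {x : M}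
    (hx : x ∈ wit x₀ ρ) : x ∈ step x₀ D := by
  right
  exact Set.mem_biUnion hρ hx

lemma map_val_pmap (D : Set M) (l : List M) (h : ∀ d ∈ l, d ∈ D) :
    List.map Subtype.val (l.pmap (fun a ha => (⟨a, ha⟩ : D)) h) = l := by
  simp [List.map_pmap]

lemma card_step (x₀ : M) (D : Set M) : #(step x₀ D) ≤ max ℵ₀ #D := by
  classical
  set T := {ρ : Req M | ∀ d ∈ ρ.1, d ∈ D} with hT
  have haleph : ℵ₀ ≤ max ℵ₀ #D := le_max_left _ _
  -- cardinality of T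
  have hTcard : #T ≤ max ℵ₀ #D := by
    set C := ℕ × List (List ℚ) × List (List ℚ) × ℚ with hC
    have hinj : Function.Injective
        (fun ρ : T => ((ρ.1.1.pmap (fun a ha => (⟨a, ha⟩ : D)) ρ.2, ρ.1.2) : List D × C)) := by
      rintro ⟨⟨l₁, c₁⟩, h₁⟩ ⟨⟨l₂, c₂⟩, h₂⟩ h
      simp only [Prod.mk.injEq] at h
      have hl : l₁ = l₂ := by
        have := congrArg (List.map Subtype.val) h.1
        rwa [map_val_pmap D l₁ h₁, map_val_pmap D l₂ h₂] at this
      simp_all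
    have h1 : #T ≤ #(List D × C) := Cardinal.mk_le_of_injective hinj
    have h2 : #(List D × C) = #(List D) * Cardinal.lift.{_} #C := by
      rw [Cardinal.mk_prod, Cardinal.lift_uzero]
    have h3 : Cardinal.lift.{_} #C ≤ ℵ₀ := by
      rw [Cardinal.lift_le_aleph0]
      exact Cardinal.mk_le_aleph0
    have h4 : #(List D) ≤ max ℵ₀ #D := Cardinal.mk_list_le_max _
    calc #T ≤ #(List D) * Cardinal.lift.{_} #C := h2 ▸ h1
      _ ≤ max ℵ₀ #D * max ℵ₀ #D := by
          exact mul_le_mul' h4 (h3.trans haleph)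
      _ = max ℵ₀ #D := Cardinal.mul_eq_self haleph
  -- cardinality of the union of witnesses
  have hU : #(⋃ ρ ∈ T, {x | x ∈ wit x₀ ρ}) ≤ max ℵ₀ #D := by
    rw [Set.biUnion_eq_iUnion]
    have h5 := Cardinal.mk_iUnion_le (fun ρ : T => {x | x ∈ wit x₀ ρ.1})
    have hsup : (⨆ ρ : T, #{x | x ∈ wit x₀ ρ.1}) ≤ ℵ₀ := by
      apply ciSup_le'
      intro ρ
      exact ((List.finite_toSet _).countable).le_aleph0
    calc #(⋃ ρ : T, {x | x ∈ wit x₀ ρ.1}) ≤ #T * ⨆ ρ : T, #{x | x ∈ wit x₀ ρ.1} := h5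
      _ ≤ max ℵ₀ #D * max ℵ₀ #D := mul_le_mul' hTcard (hsup.trans haleph)
      _ = max ℵ₀ #D := Cardinal.mul_eq_self haleph
  calc #(step x₀ D) ≤ #D + #(⋃ ρ ∈ T, {x | x ∈ wit x₀ ρ}) := Cardinal.mk_union_le _ _
    _ ≤ max ℵ₀ #D + max ℵ₀ #D := add_le_add (le_max_right _ _) hU
    _ = max ℵ₀ #D := by
        rw [Cardinal.add_eq_self haleph]

noncomputable def DD (x₀ : M) (A : Set M) : ℕ → Set M
  | 0 => A
  | n + 1 => step x₀ (DD x₀ A n)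

lemma DD_mono (x₀ : M) (A : Set M) : Monotone (DD x₀ A) :=
  monotone_nat_of_le_succ fun n => subset_step x₀ (DD x₀ A n)

lemma card_DD (x₀ : M) (A : Set M) (hA : ℵ₀ ≤ #A) (n : ℕ) : #(DD x₀ A n) ≤ #A := by
  induction n with
  | zero => exact le_rfl
  | succ n ih =>
    calc #(DD x₀ A (n + 1)) ≤ max ℵ₀ #(DD x₀ A n) := card_step _ _
      _ ≤ max ℵ₀ #A := max_le_max le_rfl ih
      _ = #A := max_eq_right hA

end Stmt18Aux

open Stmt18Aux in
theorem stmt18 {M : Type*} [MetricSpace M] (N : Set M) (A : Set M)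
    (hAN : A ⊆ N) (hAinf : A.Infinite) (hAdense : N ⊆ closure A) :
    ∃ S : Set M, N ⊆ S ∧ IsAILocalRetract S ∧
      ∃ B : Set M, B ⊆ S ∧ S ⊆ closure B ∧ Cardinal.mk B ≤ Cardinal.mk A := by
  classical
  obtain ⟨x₀, hx₀A⟩ := hAinf.nonempty
  set Dω : Set M := ⋃ n, DD x₀ A n with hDω
  have hDn : ∀ n, DD x₀ A n ⊆ Dω := fun n => Set.subset_iUnion (DD x₀ A) n
  have hA0 : A ⊆ Dω := hDn 0
  set S : Set M := closure Dω with hS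
  have hDS : Dω ⊆ S := subset_closure
  have hNS : N ⊆ S := fun x hx => closure_mono hA0 (hAdense hx)
  have hAka : ℵ₀ ≤ Cardinal.mk A := by
    rw [Cardinal.aleph0_le_mk_iff]
    exact hAinf.to_subtype
  refine ⟨S, hNS, ?_, Dω, hDS, subset_rfl, ?_⟩
  swap
  · -- cardinality
    have h1 := Cardinal.mk_iUnion_le_lift (fun n : ℕ => DD x₀ A n)
    simp only [Cardinal.lift_uzero, Cardinal.mk_nat, Cardinal.lift_aleph0] at h1
    have h2 : (⨆ n : ℕ, Cardinal.mk (DD x₀ A n)) ≤ Cardinal.mk A := by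
      apply ciSup_le'
      intro n
      exact card_DD x₀ A hAka n
    calc Cardinal.mk Dω ≤ ℵ₀ * ⨆ n : ℕ, Cardinal.mk (DD x₀ A n) := h1
      _ ≤ Cardinal.mk A * Cardinal.mk A := mul_le_mul' hAka h2
      _ = Cardinal.mk A := Cardinal.mul_eq_self hAka
  -- the retract property
  intro E ε hε
  set P := (E ×ˢ E).filter (fun p => p.1 ≠ p.2) with hP
  set m : ℝ := if h : P.Nonempty then P.inf' h (fun p => dist p.1 p.2) else 1 with hm
  have hm0 : 0 < m := by
    rw [hm]
    split_ifs with h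
    · rw [Finset.lt_inf'_iff]
      rintro ⟨x, y⟩ hxy
      rw [hP, Finset.mem_filter] at hxy
      exact dist_pos.2 hxy.2
    · exact one_pos
  have hmle : ∀ x ∈ E, ∀ y ∈ E, x ≠ y → m ≤ dist x y := by
    intro x hx y hy hxy
    have hpP : (x, y) ∈ P := by
      rw [hP, Finset.mem_filter, Finset.mem_product]
      exact ⟨⟨hx, hy⟩, hxy⟩
    rw [hm, dif_pos ⟨_, hpP⟩]
    exact Finset.inf'_le _ hpP
  obtain ⟨δ, hδ0, hδ6⟩ : ∃ δ : ℚ, 0 < (δ : ℝ) ∧ 6 * (δ : ℝ) ≤ ε * m := by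
    obtain ⟨q, hq0, hq⟩ := exists_rat_btwn (show (0 : ℝ) < ε * m / 6 by positivity)
    exact ⟨q, hq0, by linarith⟩
  set fs : List M := (E.filter (fun x => x ∈ S)).toList with hfs
  set es : List M := (E.filter (fun x => x ∉ S)).toList with hes
  have hfs_mem : ∀ x, x ∈ fs ↔ x ∈ E ∧ x ∈ S := by
    intro x; rw [hfs, Finset.mem_toList, Finset.mem_filter]
  have hes_mem : ∀ x, x ∈ es ↔ x ∈ E ∧ x ∉ S := by
    intro x; rw [hes, Finset.mem_toList, Finset.mem_filter]
  -- choose approximating points of the fixed part inside Dω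
  have hch : ∀ i : Fin fs.length, ∃ d, d ∈ Dω ∧ dist (fs.get i) d < (δ : ℝ) := by
    intro i
    have hiS : fs.get i ∈ S := ((hfs_mem _).1 (List.get_mem fs i)).2
    rw [hS, Metric.mem_closure_iff] at hiS
    obtain ⟨d, hd1, hd2⟩ := hiS (δ : ℝ) hδ0
    exact ⟨d, hd1, hd2⟩
  choose dfun hdfun1 hdfun2 using hch
  set ds : List M := List.ofFn dfun with hds
  have hds_len : ds.length = fs.length := List.length_ofFn
  -- a common stage containing all the chosen points
  have hstage : ∀ i : Fin fs.length, ∃ k, dfun i ∈ DD x₀ A k := by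
    intro i
    have := hdfun1 i
    rw [hDω, Set.mem_iUnion] at this
    exact this
  choose nf hnf using hstage
  set n : ℕ := Finset.univ.sup nf with hn
  have hdsD : ∀ d ∈ ds, d ∈ DD x₀ A n := by
    intro d hd
    rw [hds, List.mem_ofFn] at hd
    obtain ⟨i, rfl⟩ := hd
    exact DD_mono x₀ A (Finset.le_sup (Finset.mem_univ i)) (hnf i)
  -- rational matrices
  obtain ⟨q1f, hq1⟩ : ∃ q : Fin fs.length → Fin es.length → ℚ,
      ∀ i j, |dist (dfun i) (es.get j) - (q i j : ℝ)| < (δ : ℝ) :=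
    ⟨fun i j => (exists_rat_near (dist (dfun i) (es.get j)) hδ0).choose,
      fun i j => (exists_rat_near (dist (dfun i) (es.get j)) hδ0).choose_spec⟩
  obtain ⟨q2f, hq2⟩ : ∃ q : Fin es.length → Fin es.length → ℚ,
      ∀ j j', |dist (es.get j) (es.get j') - (q j j' : ℝ)| < (δ : ℝ) :=
    ⟨fun j j' => (exists_rat_near (dist (es.get j) (es.get j')) hδ0).choose,
      fun j j' => (exists_rat_near (dist (es.get j) (es.get j')) hδ0).choose_spec⟩
  set q1L : List (List ℚ) := List.ofFn (fun i => List.ofFn (q1f i)) with hq1L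
  set q2L : List (List ℚ) := List.ofFn (fun j => List.ofFn (q2f j)) with hq2L
  have hql1 : ∀ (i j : ℕ) (hi : i < fs.length) (hj : j < es.length),
      ql q1L i j = q1f ⟨i, hi⟩ ⟨j, hj⟩ := by
    intro i j hi hj
    have h1 : q1L.getD i [] = List.ofFn (q1f ⟨i, hi⟩) := by
      rw [List.getD_eq_getElem _ _ (show i < q1L.length by simp [hq1L, hi])]
      simp [hq1L, List.getElem_ofFn]
    rw [ql, h1,
      List.getD_eq_getElem _ _ (show j < (List.ofFn (q1f ⟨i, hi⟩)).length by simp [hj]),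
      List.getElem_ofFn]
  have hql2 : ∀ (j j' : ℕ) (hj : j < es.length) (hj' : j' < es.length),
      ql q2L j j' = q2f ⟨j, hj⟩ ⟨j', hj'⟩ := by
    intro j j' hj hj'
    have h1 : q2L.getD j [] = List.ofFn (q2f ⟨j, hj⟩) := by
      rw [List.getD_eq_getElem _ _ (show j < q2L.length by simp [hq2L, hj])]
      simp [hq2L, List.getElem_ofFn]
    rw [ql, h1,
      List.getD_eq_getElem _ _ (show j' < (List.ofFn (q2f ⟨j, hj⟩)).length by simp [hj']),
      List.getElem_ofFn]
  set ρ : Req M := (ds, es.length, q1L, q2L, 3 * δ) with hρ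
  have hρ1 : ρ.1 = ds := rfl
  have hSat_es : Sat x₀ ρ es := by
    refine ⟨rfl, ?_, ?_⟩
    · intro i j hi hj
      rw [hρ1, hds_len] at hi
      have hi' : i < ds.length := hds_len ▸ hi
      have : ρ.1.getD i x₀ = dfun ⟨i, hi⟩ := by
        rw [hρ1, List.getD_eq_getElem _ _ hi']
        simp [hds, List.getElem_ofFn]
      rw [this, List.getD_eq_getElem _ _ hj]
      have hql : ql ρ.2.2.1 i j = q1f ⟨i, hi⟩ ⟨j, hj⟩ := hql1 i j hi hj
      rw [hql]
      have := hq1 ⟨i, hi⟩ ⟨j, hj⟩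
      rw [List.get_eq_getElem] at this
      have h3 : (δ : ℝ) ≤ ((3 * δ : ℚ) : ℝ) := by push_cast; linarith
      exact le_trans this.le h3
    · intro j j' hj hj'
      rw [List.getD_eq_getElem _ _ hj, List.getD_eq_getElem _ _ hj']
      have hql : ql ρ.2.2.2.1 j j' = q2f ⟨j, hj⟩ ⟨j', hj'⟩ := hql2 j j' hj hj'
      rw [hql]
      have := hq2 ⟨j, hj⟩ ⟨j', hj'⟩
      simp only [List.get_eq_getElem] at this
      have h3 : (δ : ℝ) ≤ ((3 * δ : ℚ) : ℝ) := by push_cast; linarith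
      exact le_trans this.le h3
  set gs : List M := wit x₀ ρ with hgsdef
  have hgs : Sat x₀ ρ gs := wit_sat x₀ ρ ⟨es, hSat_es⟩
  have hgs1 : gs.length = es.length := hgs.1
  have hgsD : ∀ x ∈ gs, x ∈ Dω := by
    intro x hx
    refine hDn (n + 1) ?_
    exact mem_step x₀ (DD x₀ A n) (ρ := ρ) hdsD hx
  set r : M → M := fun x => if x ∈ S then x else gs.getD (es.idxOf x) x₀ with hr
  have hrfix : ∀ x, x ∈ S → r x = x := by
    intro x hxS; rw [hr]; exact if_pos hxS
  have hrnew : ∀ x ∈ E, x ∉ S → ∃ hj : es.idxOf x < es.length,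
      r x = gs.getD (es.idxOf x) x₀ ∧ es.get ⟨es.idxOf x, hj⟩ = x := by
    intro x hx hxS
    have hxes : x ∈ es := (hes_mem x).2 ⟨hx, hxS⟩
    refine ⟨List.idxOf_lt_length_iff.2 hxes, ?_, ?_⟩
    · rw [hr]; exact if_neg hxS
    · rw [List.get_eq_getElem]
      exact List.getElem_idxOf _
  have hrS : ∀ x ∈ E, r x ∈ S := by
    intro x hx
    by_cases hxS : x ∈ S
    · rw [hrfix x hxS]; exact hxS
    · obtain ⟨hj, hrx, -⟩ := hrnew x hx hxS
      rw [hrx, List.getD_eq_getElem _ _ (by rw [hgs1]; exact hj)]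
      exact hDS (hgsD _ (List.getElem_mem _))
  -- the mixed estimate
  have hmix : ∀ x ∈ E, x ∈ S → ∀ y ∈ E, y ∉ S →
      |dist (r x) (r y) - dist x y| ≤ 6 * (δ : ℝ) := by
    intro x hx hxS y hy hyS
    have hxfs : x ∈ fs := (hfs_mem x).2 ⟨hx, hxS⟩
    have hi : fs.idxOf x < fs.length := List.idxOf_lt_length_iff.2 hxfs
    set i : Fin fs.length := ⟨fs.idxOf x, hi⟩ with hidef
    have hfsx : fs.get i = x := by
      rw [List.get_eq_getElem]; exact List.getElem_idxOf _
    obtain ⟨hj, hry, hesy⟩ := hrnew y hy hyS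
    set j : Fin es.length := ⟨es.idxOf y, hj⟩ with hjdef
    set dx : M := dfun i with hdx
    set g : M := gs.getD (es.idxOf y) x₀ with hg
    have h1 : dist x dx < (δ : ℝ) := by rw [← hfsx]; exact hdfun2 i
    have h2 : |dist dx g - ((q1f i j : ℚ) : ℝ)| ≤ 3 * (δ : ℝ) := by
      have hb1 : (i : ℕ) < ρ.1.length := by rw [hρ1, hds_len]; exact hi
      have hb2 : (j : ℕ) < gs.length := by rw [hgs1]; exact hj
      have := hgs.2.1 i j hb1 hb2
      have hds_i : ρ.1.getD i x₀ = dx := by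
        rw [hρ1, List.getD_eq_getElem _ _ (show (i : ℕ) < ds.length by rw [hds_len]; exact hi)]
        simp [hds, hdx, List.getElem_ofFn]
      have hg_j : gs.getD (j : ℕ) x₀ = g := rfl
      rw [hds_i, hg_j, hql1 i j hi hj] at this
      have h3 : ((3 * δ : ℚ) : ℝ) = 3 * (δ : ℝ) := by push_cast; ring
      rw [h3] at this
      convert this using 4 <;> simp [hidef, hjdef]
    have h3 : |dist dx y - ((q1f i j : ℚ) : ℝ)| < (δ : ℝ) := by
      have := hq1 i j
      rwa [hesy] at this
    have h4 : |dist dx y - dist x y| ≤ dist dx x := abs_dist_sub_le dx x y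
    have h5 : |dist x g - dist dx g| ≤ dist x dx := abs_dist_sub_le x dx g
    have hrx : r x = x := hrfix x hxS
    rw [hrx, hry]
    have hd : dist dx x = dist x dx := dist_comm dx x
    have t1 := abs_sub (dist x g - dist dx g) (dist dx g - dist x y)
    -- combine with triangle inequalities on |·|
    have e1 : |dist x g - dist x y| ≤
        |dist x g - dist dx g| + |dist dx g - ((q1f i j : ℚ) : ℝ)| +
          |((q1f i j : ℚ) : ℝ) - dist dx y| + |dist dx y - dist x y| := by
      have a1 := abs_sub_le (dist x g) (dist dx g) (dist x y)
      have a2 := abs_sub_le (dist dx g) ((q1f i j : ℚ) : ℝ) (dist x y)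
      have a3 := abs_sub_le ((q1f i j : ℚ) : ℝ) (dist dx y) (dist x y)
      linarith
    have e2 : |((q1f i j : ℚ) : ℝ) - dist dx y| < (δ : ℝ) := by
      rw [abs_sub_comm]; exact h3
    linarith
  -- the estimate for two new points
  have hnew : ∀ x ∈ E, x ∉ S → ∀ y ∈ E, y ∉ S →
      |dist (r x) (r y) - dist x y| ≤ 6 * (δ : ℝ) := by
    intro x hx hxS y hy hyS
    obtain ⟨hi, hrx, hesx⟩ := hrnew x hx hxS
    obtain ⟨hj, hry, hesy⟩ := hrnew y hy hyS
    set i : Fin es.length := ⟨es.idxOf x, hi⟩ with hidef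
    set j : Fin es.length := ⟨es.idxOf y, hj⟩ with hjdef
    have h2 : |dist (gs.getD (i : ℕ) x₀) (gs.getD (j : ℕ) x₀) - ((q2f i j : ℚ) : ℝ)|
        ≤ 3 * (δ : ℝ) := by
      have hb1 : (i : ℕ) < gs.length := by rw [hgs1]; exact hi
      have hb2 : (j : ℕ) < gs.length := by rw [hgs1]; exact hj
      have := hgs.2.2 i j hb1 hb2
      rw [hql2 i j hi hj] at this
      have h3 : ((3 * δ : ℚ) : ℝ) = 3 * (δ : ℝ) := by push_cast; ring
      rw [h3] at this
      convert this using 4 <;> simp [hidef, hjdef]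
    have h3 : |dist x y - ((q2f i j : ℚ) : ℝ)| < (δ : ℝ) := by
      have := hq2 i j
      rwa [hesx, hesy] at this
    rw [hrx, hry]
    have a1 := abs_sub_le (dist (gs.getD (i : ℕ) x₀) (gs.getD (j : ℕ) x₀))
      ((q2f i j : ℚ) : ℝ) (dist x y)
    have e2 : |((q2f i j : ℚ) : ℝ) - dist x y| < (δ : ℝ) := by
      rw [abs_sub_comm]; exact h3
    have : |dist (gs.getD (↑i) x₀) (gs.getD (↑j) x₀) - dist x y| ≤ 4 * (δ : ℝ) := by
      linarith
    calc |dist (gs.getD (↑i) x₀) (gs.getD (↑j) x₀) - dist x y| ≤ 4 * (δ : ℝ) := this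
      _ ≤ 6 * (δ : ℝ) := by linarith
  -- the key multiplicative estimate
  have key : ∀ x ∈ E, ∀ y ∈ E, |dist (r x) (r y) - dist x y| ≤ ε * dist x y := by
    intro x hx y hy
    by_cases hxy : x = y
    · subst hxy
      simp only [dist_self, sub_zero, abs_eq_zero, mul_zero]
      simp [dist_self]
    · have hmd : m ≤ dist x y := hmle x hx y hy hxy
      have h6 : 6 * (δ : ℝ) ≤ ε * dist x y :=
        le_trans hδ6 (mul_le_mul_of_nonneg_left hmd hε.le)
      by_cases hxS : x ∈ S <;> by_cases hyS : y ∈ S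
      · rw [hrfix x hxS, hrfix y hyS, sub_self, abs_zero]
        positivity
      · exact (hmix x hx hxS y hy hyS).trans h6
      · have := hmix y hy hyS x hx hxS
        rw [dist_comm (r y) (r x), dist_comm y x] at this
        exact this.trans h6
      · exact (hnew x hx hxS y hy hyS).trans h6
  refine ⟨r, hrS, fun e he heS => hrfix e heS, ?_⟩
  intro x hx y hy
  have hk := abs_le.1 (key x hx y hy)
  have e1 : (1 - ε) * dist x y = dist x y - ε * dist x y := by ring
  have e2 : (1 + ε) * dist x y = dist x y + ε * dist x y := by ring
  constructor
  · rw [e1]; linarith [hk.1]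
  · rw [e2]; linarith [hk.2]
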